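/- Let G be a finite group, H ≤ G, and V an abelian normal subgroup of G with G = HV. Then H is pronormal in G if and only if for every H-invariant subgroup U ≤ V one has U = N_U(H)·[H,U]. -/

import Mathlib

open Pointwise
open scoped commutatorElement

/-- The conjugate subgroup `H^g = g H g⁻¹` (conjugation by `g`). -/
def conjSub {G : Type*} [Group G] (g : G) (H : Subgroup G) : Subgroup G :=
  H.map (MulAut.conj g).toMonoidHom

/-- A subgroup `H` of `G` is pronormal in `G` if for every `g ∈ G` the subgroups `H` and
`H^g` are conjugate by an element of `⟨H, H^g⟩`. -/
def IsPronormal {G : Type*} [Group G] (H : Subgroup G) : Prop :=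
  ∀ g : G, ∃ x ∈ H ⊔ conjSub g H, conjSub x H = conjSub g H

section Aux

variable {G : Type*} [Group G]

lemma mem_conjSub {g x : G} {H : Subgroup G} :
    x ∈ conjSub g H ↔ ∃ h ∈ H, g * h * g⁻¹ = x := by
  simp [conjSub, Subgroup.mem_map]

lemma conjSub_conjSub (a b : G) (K : Subgroup G) :
    conjSub a (conjSub b K) = conjSub (a * b) K := by
  ext x
  simp only [mem_conjSub]
  constructor
  · rintro ⟨y, ⟨h, hh, rfl⟩, rfl⟩
    exact ⟨h, hh, by group⟩
  · rintro ⟨h, hh, rfl⟩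
    exact ⟨b * h * b⁻¹, ⟨h, hh, rfl⟩, by group⟩

lemma conjSub_one (K : Subgroup G) : conjSub 1 K = K := by
  ext x; simp [mem_conjSub]

lemma conjSub_eq_self_iff {t : G} {H : Subgroup G} :
    conjSub t H = H ↔ t ∈ Subgroup.normalizer (H : Set G) := by
  rw [Subgroup.mem_normalizer_iff]
  constructor
  · intro he h
    constructor
    · intro hh
      rw [← he]
      exact mem_conjSub.2 ⟨h, hh, rfl⟩
    · intro hh
      rw [← he] at hh
      obtain ⟨h', hh', he'⟩ := mem_conjSub.1 hh
      have h2 : h' = h := mul_left_cancel (mul_right_cancel he')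
      exact h2 ▸ hh'
  · intro hn
    ext x
    rw [mem_conjSub]
    constructor
    · rintro ⟨h, hh, rfl⟩
      exact (hn h).1 hh
    · intro hx
      refine ⟨t⁻¹ * x * t, ?_, by group⟩
      have := (hn (t⁻¹ * x * t)).2
      apply this
      have : t * (t⁻¹ * x * t) * t⁻¹ = x := by group
      rw [this]
      exact hx

lemma conjSub_mem_self {h : G} {H : Subgroup G} (hh : h ∈ H) : conjSub h H = H :=
  conjSub_eq_self_iff.2 (Subgroup.le_normalizer hh)

/-- If `H` normalizes `N`, the carrier of `H ⊔ N` is the set product `↑H * ↑N`. -/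
lemma sup_coe_eq_mul (H N : Subgroup G) (hle : H ≤ Subgroup.normalizer (N : Set G)) :
    (↑(H ⊔ N) : Set G) = (H : Set G) * (N : Set G) := by
  rw [Subgroup.sup_eq_closure_mul]
  refine Set.Subset.antisymm (fun x hx => ?_) Subgroup.subset_closure
  induction hx using Subgroup.closure_induction'' with
  | one => exact ⟨1, one_mem _, 1, one_mem _, mul_one 1⟩
  | mem _ hx => exact hx
  | inv_mem x hx =>
    obtain ⟨x, hx, y, hy, rfl⟩ := hx
    exact ⟨x⁻¹, inv_mem hx,
      x * y⁻¹ * x⁻¹, by simpa using (Subgroup.mem_normalizer_iff.1 (hle hx) y⁻¹).1 (inv_mem hy),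
      by group⟩
  | mul x' x'' _ _ hx hx' =>
    obtain ⟨x, hx, y, hy, rfl⟩ := hx
    obtain ⟨x', hx', y', hy', rfl⟩ := hx'
    exact ⟨x * x', mul_mem hx hx',
      x'⁻¹ * y * x'⁻¹⁻¹ * y',
      mul_mem ((Subgroup.mem_normalizer_iff.1 (inv_mem (hle hx')) y).1 hy) hy', by group⟩

end Aux

/-- Let `V` be an abelian normal subgroup of a finite group `G` with
`G = HV`. Then `H` is pronormal in `G` iff for every `H`-invariant subgroup `U ≤ V`
one has `U = N_U(H) · [H, U]` (as subsets of `G`). -/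
theorem stmt14 {G : Type*} [Group G] [Finite G] (H V : Subgroup G) [V.Normal]
    (hab : ∀ x ∈ V, ∀ y ∈ V, x * y = y * x) (hG : H ⊔ V = ⊤) :
    IsPronormal H ↔
      ∀ U : Subgroup G, U ≤ V → (∀ h ∈ H, ∀ u ∈ U, h * u * h⁻¹ ∈ U) →
        (U : Set G) = (↑(U ⊓ Subgroup.normalizer (H : Set G)) : Set G) * (↑⁅H, U⁆ : Set G) := by
  have hVn : V.Normal := ‹V.Normal›
  constructor
  · -- Pronormal ⟹ factorization condition
    intro hpro U hUV hinv
    -- `⁅H, U⁆ ≤ U`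
    have hHUle : ⁅H, U⁆ ≤ U := by
      rw [Subgroup.commutator_le]
      intro h hh u hu
      have h1 : h * u * h⁻¹ ∈ U := hinv h hh u hu
      have : ⁅h, u⁆ = (h * u * h⁻¹) * u⁻¹ := by rw [commutatorElement_def]
      rw [this]
      exact mul_mem h1 (inv_mem hu)
    -- `H` normalizes `U`
    have hUc : ∀ h' ∈ H, conjSub h' U = U := by
      intro h' hh'
      apply le_antisymm
      · intro x hx
        obtain ⟨u, hu, rfl⟩ := mem_conjSub.1 hx
        exact hinv h' hh' u hu
      · intro u hu
        exact mem_conjSub.2 ⟨h'⁻¹ * u * h', by simpa using hinv h'⁻¹ (inv_mem hh') u hu, by group⟩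
    -- `H` normalizes `⁅H, U⁆`
    have hnorm : H ≤ Subgroup.normalizer ((⁅H, U⁆ : Subgroup G) : Set G) := by
      intro h' hh'
      rw [← conjSub_eq_self_iff]
      show Subgroup.map _ _ = _
      rw [show (⁅H, U⁆ : Subgroup G).map (MulAut.conj h').toMonoidHom
            = ⁅conjSub h' H, conjSub h' U⁆ from Subgroup.map_commutator H U (MulAut.conj h').toMonoidHom,
        conjSub_mem_self hh', hUc h' hh']
    apply Set.Subset.antisymm
    · -- main inclusion, uses pronormality
      intro u hu
      have huU : u ∈ U := hu
      obtain ⟨x, hx, hconj⟩ := hpro u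
      -- `x ∈ H ⊔ ⁅H, U⁆`
      have hxK : x ∈ H ⊔ ⁅H, U⁆ := by
        refine (sup_le le_sup_left ?_ : H ⊔ conjSub u H ≤ H ⊔ ⁅H, U⁆) hx
        intro y hy
        obtain ⟨h, hh, rfl⟩ := mem_conjSub.1 hy
        have h1 : ⁅u, h⁆ ∈ ⁅H, U⁆ := by
          rw [Subgroup.commutator_comm]
          exact Subgroup.commutator_mem_commutator huU hh
        have : u * h * u⁻¹ = ⁅u, h⁆ * h := by rw [commutatorElement_def]; group
        rw [this]
        exact mul_mem (Subgroup.mem_sup_right h1) (Subgroup.mem_sup_left hh)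
      have hxK' : x ∈ ((H : Set G) * ((⁅H, U⁆ : Subgroup G) : Set G)) := by
        rw [← sup_coe_eq_mul H ⁅H, U⁆ hnorm]
        exact hxK
      obtain ⟨h', hh', w, hw, rfl⟩ := hxK'
      have hwU : w ∈ U := hHUle hw
      -- conjugate of `u` back into `U`
      set v' := h'⁻¹ * u * h'⁻¹⁻¹ with hv'def
      have hv'U : v' ∈ U := hinv h'⁻¹ (inv_mem hh') u huU
      have hu_eq : h' * v' * h'⁻¹ = u := by rw [hv'def]; group
      -- `v'⁻¹ * w` normalizes `H`
      have e1 : conjSub (v'⁻¹ * w) H = H := by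
        have e2 : conjSub h' (conjSub w H) = conjSub h' (conjSub v' H) := by
          rw [conjSub_conjSub, conjSub_conjSub, hconj]
          have : u = (h' * v') * h'⁻¹ := by rw [← hu_eq]
          rw [this, ← conjSub_conjSub, conjSub_mem_self (inv_mem hh')]
        have e3 : conjSub w H = conjSub v' H := by
          have h3 := congrArg (conjSub h'⁻¹) e2
          simp only [conjSub_conjSub, inv_mul_cancel_left, inv_mul_cancel, conjSub_one] at h3
          exact h3
        rw [← conjSub_conjSub, e3, conjSub_conjSub, inv_mul_cancel, conjSub_one]
      have htN : v'⁻¹ * w ∈ Subgroup.normalizer (H : Set G) := conjSub_eq_self_iff.1 e1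
      have htU : v'⁻¹ * w ∈ U := mul_mem (inv_mem hv'U) hwU
      -- the decomposition `u = (v'⁻¹ * w)⁻¹ * (⁅h', v'⁆ * w)`
      have c1 : Commute u v' := hab u (hUV huU) v' (hUV hv'U)
      have c2 : Commute u w := hab u (hUV huU) w (hUV hwU)
      have key : (v'⁻¹ * w)⁻¹ * (⁅h', v'⁆ * w) = u := by
        calc (v'⁻¹ * w)⁻¹ * (⁅h', v'⁆ * w)
            = w⁻¹ * v' * (h' * v' * h'⁻¹ * v'⁻¹ * w) := by rw [commutatorElement_def]; group
          _ = w⁻¹ * v' * (u * v'⁻¹ * w) := by rw [hu_eq]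
          _ = w⁻¹ * v' * (v'⁻¹ * u * w) := by rw [c1.inv_right.eq]
          _ = w⁻¹ * v' * (v'⁻¹ * (w * u)) := by rw [mul_assoc v'⁻¹, c2.eq]
          _ = u := by group
      refine ⟨(v'⁻¹ * w)⁻¹, ?_, ⁅h', v'⁆ * w, ?_, key⟩
      · exact inv_mem (Subgroup.mem_inf.2 ⟨htU, htN⟩)
      · exact mul_mem (Subgroup.commutator_mem_commutator hh' hv'U) hw
    · -- easy inclusion
      rintro x ⟨n, hn, w, hw, rfl⟩
      have hnU : n ∈ U := (Subgroup.mem_inf.1 hn).1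
      exact mul_mem hnU (hHUle hw)
  · -- factorization condition ⟹ pronormal
    intro hcond g
    have hg : g ∈ (↑(H ⊔ V) : Set G) := by rw [hG]; trivial
    rw [Subgroup.mul_normal H V] at hg
    obtain ⟨h₀, hh₀, v₀, hv₀, rfl⟩ := hg
    set v := h₀ * v₀ * h₀⁻¹ with hv_def
    have hvV : v ∈ V := hVn.conj_mem v₀ hv₀ h₀
    have hgv : conjSub (h₀ * v₀) H = conjSub v H := by
      have h1 : h₀ * v₀ = v * h₀ := by rw [hv_def]; group
      rw [h1, ← conjSub_conjSub, conjSub_mem_self hh₀]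
    set S : Set G := (fun h => h * v * h⁻¹) '' (H : Set G) with hS_def
    set U : Subgroup G := Subgroup.closure S with hU_def
    have hUV : U ≤ V := by
      rw [hU_def, Subgroup.closure_le]
      rintro _ ⟨h, hh, rfl⟩
      exact hVn.conj_mem v hvV h
    have hvU : v ∈ U := Subgroup.subset_closure ⟨1, one_mem H, by group⟩
    have hinv : ∀ h ∈ H, ∀ u ∈ U, h * u * h⁻¹ ∈ U := by
      intro h hh u hu
      have hle : conjSub h U ≤ U := by
        rw [hU_def]
        show Subgroup.map _ _ ≤ _
        rw [MonoidHom.map_closure, Subgroup.closure_le]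
        rintro _ ⟨_, ⟨h', hh', rfl⟩, rfl⟩
        refine Subgroup.subset_closure ⟨h * h', mul_mem hh hh', ?_⟩
        show (h * h') * v * (h * h')⁻¹ = (MulAut.conj h) (h' * v * h'⁻¹)
        simp [MulAut.conj_apply]
        group
      exact hle (mem_conjSub.2 ⟨u, hu, rfl⟩)
    have hHUle : ⁅H, U⁆ ≤ U := by
      rw [Subgroup.commutator_le]
      intro h hh u hu
      have h1 : h * u * h⁻¹ ∈ U := hinv h hh u hu
      have : ⁅h, u⁆ = (h * u * h⁻¹) * u⁻¹ := by rw [commutatorElement_def]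
      rw [this]
      exact mul_mem h1 (inv_mem hu)
    have heq := hcond U hUV hinv
    have hvmem : v ∈ ((↑(U ⊓ Subgroup.normalizer (H : Set G)) : Set G) * (↑⁅H, U⁆ : Set G)) := by
      rw [← heq]; exact hvU
    obtain ⟨n, hn, w, hw, hvnw⟩ := hvmem
    have hnU : n ∈ U := (Subgroup.mem_inf.1 hn).1
    have hnN : n ∈ Subgroup.normalizer (H : Set G) := (Subgroup.mem_inf.1 hn).2
    have hwU : w ∈ U := hHUle hw
    -- `⁅H, U⁆ ≤ H ⊔ conjSub v H`
    have hKle : ⁅H, U⁆ ≤ H ⊔ conjSub v H := by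
      set K := H ⊔ conjSub v H with hK_def
      rw [Subgroup.commutator_le]
      intro h hh u hu
      -- commutators with `v`-conjugates are in `K`
      have hbase : ∀ h'' ∈ H, ⁅h'', v⁆ ∈ K := by
        intro h'' hh''
        have : ⁅h'', v⁆ = h'' * (v * h''⁻¹ * v⁻¹) := by rw [commutatorElement_def]; group
        rw [this]
        exact mul_mem (Subgroup.mem_sup_left hh'')
          (Subgroup.mem_sup_right (mem_conjSub.2 ⟨h''⁻¹, inv_mem hh'', rfl⟩))
      have main : u ∈ V ∧ ⁅h, u⁆ ∈ K := by
        refine Subgroup.closure_induction (k := S)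
          (p := fun x _ => x ∈ V ∧ ⁅h, x⁆ ∈ K) ?_ ?_ ?_ ?_ hu
        · rintro _ ⟨h', hh', rfl⟩
          refine ⟨hVn.conj_mem v hvV h', ?_⟩
          have : ⁅h, h' * v * h'⁻¹⁆ = h' * ⁅h'⁻¹ * h * h', v⁆ * h'⁻¹ := by
            rw [commutatorElement_def, commutatorElement_def]; group
          rw [this]
          exact mul_mem (mul_mem (Subgroup.mem_sup_left hh')
            (hbase _ (mul_mem (mul_mem (inv_mem hh') hh) hh'))) (Subgroup.mem_sup_left (inv_mem hh'))
        · constructor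
          · exact one_mem V
          · have : ⁅h, (1 : G)⁆ = 1 := by rw [commutatorElement_def]; group
            rw [this]; exact one_mem K
        · rintro a b _ _ ⟨haV, haK⟩ ⟨hbV, hbK⟩
          refine ⟨mul_mem haV hbV, ?_⟩
          have hcbV : h * b * h⁻¹ * b⁻¹ ∈ V := mul_mem (hVn.conj_mem b hbV h) (inv_mem hbV)
          have hc : (h * b * h⁻¹ * b⁻¹) * a⁻¹ = a⁻¹ * (h * b * h⁻¹ * b⁻¹) :=
            hab _ hcbV _ (inv_mem haV)
          have hsplit : ⁅h, a * b⁆ = ⁅h, a⁆ * ⁅h, b⁆ := by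
            calc ⁅h, a * b⁆ = h * a * h⁻¹ * ((h * b * h⁻¹ * b⁻¹) * a⁻¹) := by
                  rw [commutatorElement_def]; group
              _ = h * a * h⁻¹ * (a⁻¹ * (h * b * h⁻¹ * b⁻¹)) := by rw [hc]
              _ = ⁅h, a⁆ * ⁅h, b⁆ := by
                  rw [commutatorElement_def, commutatorElement_def]; group
          rw [hsplit]
          exact mul_mem haK hbK
        · rintro a _ ⟨haV, haK⟩
          refine ⟨inv_mem haV, ?_⟩
          have hconjV : h * a⁻¹ * h⁻¹ ∈ V := hVn.conj_mem a⁻¹ (inv_mem haV) h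
          have hc : (h * a⁻¹ * h⁻¹) * a = a * (h * a⁻¹ * h⁻¹) := hab _ hconjV _ haV
          have : ⁅h, a⁻¹⁆ = ⁅h, a⁆⁻¹ := by
            calc ⁅h, a⁻¹⁆ = (h * a⁻¹ * h⁻¹) * a := by rw [commutatorElement_def]; group
              _ = a * (h * a⁻¹ * h⁻¹) := hc
              _ = ⁅h, a⁆⁻¹ := by rw [commutatorElement_def]; group
          rw [this]
          exact inv_mem haK
      exact main.2
    refine ⟨w, ?_, ?_⟩
    · rw [hgv]
      exact hKle hw
    · rw [hgv]
      have hv_eq : v = w * n := by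
        rw [← hvnw]
        exact hab n (hUV hnU) w (hUV hwU)
      calc conjSub w H = conjSub w (conjSub n H) := by rw [conjSub_eq_self_iff.2 hnN]
        _ = conjSub (w * n) H := conjSub_conjSub w n H
        _ = conjSub v H := by rw [← hv_eq]
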